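/- Let Ω₁ be a σ-compact metric space, Ω₂ a metric space, f : Ω₁ → Ω₂ Lipschitz, μ a Radon measure on Ω₁, and α ≥ 0 such that μH^α(B) ≤ μ(B) for all Borel sets B ⊆ Ω₁. Then for every Borel set A ⊆ Ω₁, the image f(A) is μH^α-measurable in Ω₂. -/

import Mathlib

open MeasureTheory Set NNReal ENNReal

theorem stmt8 {Ω₁ Ω₂ : Type*} [MetricSpace Ω₁] [MeasurableSpace Ω₁] [BorelSpace Ω₁]
    [SigmaCompactSpace Ω₁]
    [MetricSpace Ω₂] [MeasurableSpace Ω₂] [BorelSpace Ω₂]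
    (f : Ω₁ → Ω₂) (L : ℝ≥0) (hf : LipschitzWith L f)
    (μ : Measure Ω₁) [μ.Regular] (α : ℝ) (hα : 0 ≤ α)
    (hle : ∀ B : Set Ω₁, MeasurableSet B → μH[α] B ≤ μ B)
    (A : Set Ω₁) (hA : MeasurableSet A) :
    NullMeasurableSet (f '' A) (μH[α] : Measure Ω₂) := by
  set An : ℕ → Set Ω₁ := fun n => A ∩ compactCovering Ω₁ n with hAn
  have hAnm : ∀ n, MeasurableSet (An n) := fun n =>
    hA.inter (isCompact_compactCovering Ω₁ n).measurableSet
  have hAnfin : ∀ n, μ (An n) ≠ ∞ := fun n =>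
    ne_top_of_le_ne_top ((isCompact_compactCovering Ω₁ n).measure_lt_top).ne
      (measure_mono inter_subset_right)
  have hC : ∀ n m : ℕ, ∃ K, K ⊆ An n ∧ IsCompact K ∧ μ (An n \ K) < (↑(m + 1) : ℝ≥0∞)⁻¹ := by
    intro n m
    refine (hAnm n).exists_isCompact_diff_lt (hAnfin n) ?_
    simp
  choose C hCsub hCcomp hCmeas using hC
  set S : Set Ω₁ := ⋃ n, ⋃ m, C n m with hS
  have hSsub : S ⊆ A := by
    simp only [hS, iUnion_subset_iff]
    exact fun n m => (hCsub n m).trans inter_subset_left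
  have hSmeas : MeasurableSet S :=
    MeasurableSet.iUnion fun n => MeasurableSet.iUnion fun m => (hCcomp n m).measurableSet
  have hnull : μ (A \ S) = 0 := by
    have hAsub : A \ S ⊆ ⋃ n, (An n \ S) := by
      intro x hx
      obtain ⟨n, hn⟩ := iUnion_eq_univ_iff.mp (iUnion_compactCovering Ω₁) x
      exact mem_iUnion.mpr ⟨n, ⟨⟨hx.1, hn⟩, hx.2⟩⟩
    have key : ∀ n, μ (An n \ S) = 0 := by
      intro n
      have hbound : ∀ m : ℕ, μ (An n \ S) ≤ (↑m : ℝ≥0∞)⁻¹ := by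
        intro m
        have hsub : C n m ⊆ S := by rw [hS]; exact subset_iUnion₂ (s := fun n m => C n m) n m
        calc μ (An n \ S) ≤ μ (An n \ C n m) :=
              measure_mono (diff_subset_diff_right hsub)
          _ ≤ (↑(m + 1) : ℝ≥0∞)⁻¹ := (hCmeas n m).le
          _ ≤ (↑m : ℝ≥0∞)⁻¹ := by
              apply ENNReal.inv_le_inv.mpr
              exact_mod_cast Nat.le_succ m
      exact le_antisymm (ge_of_tendsto' ENNReal.tendsto_inv_nat_nhds_zero hbound) zero_le
    refine le_antisymm (le_trans (measure_mono hAsub) ?_) zero_le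
    refine le_trans (measure_iUnion_le _) ?_
    simp [key]
  have hsplit : f '' A = (⋃ n, ⋃ m, f '' C n m) ∪ f '' (A \ S) := by
    rw [← image_iUnion₂ f C]
    rw [← image_union]
    rw [union_diff_self, union_eq_self_of_subset_left hSsub]
  rw [hsplit]
  refine NullMeasurableSet.union ?_ ?_
  · exact (MeasurableSet.iUnion fun n => MeasurableSet.iUnion fun m =>
      ((hCcomp n m).image hf.continuous).measurableSet).nullMeasurableSet
  · refine NullMeasurableSet.of_null ?_
    refine le_antisymm ?_ zero_le
    calc μH[α] (f '' (A \ S)) ≤ (L : ℝ≥0∞) ^ α * μH[α] (A \ S) :=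
          hf.hausdorffMeasure_image_le hα _
      _ ≤ (L : ℝ≥0∞) ^ α * μ (A \ S) := by
          gcongr _ * ?_
          exact hle _ (hA.diff hSmeas)
      _ = 0 := by rw [hnull, mul_zero]
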